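/- arXiv:2103.03520 — 3 statements merged into one kernel-verified Lean document; each statement's English description precedes it below -/
import Mathlib

section
/- Let P be an n×n real symmetric positive definite matrix with largest eigenvalue λ_max(P). Then the map θ ↦ γ(P,θ) := (1/2)·(log det(I − θP) + tr((I − θP)^{-1} − I)) is well defined on [0, 1/λ_max(P)) (i.e., I − θP is positive definite there), satisfies γ(P,0) = 0, is strictly monotone increasing on [0, 1/λ_max(P)), and γ(P,θ) → +∞ as θ → (1/λ_max(P))⁻. -/
open Matrix Filter Set
open scoped Topology

/-- The tolerance function `γ(P,θ) = (1/2)(log det(I−θP) + tr((I−θP)⁻¹ − I))` of the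
robust extended Kalman filter. -/
noncomputable def gammaTol {n : ℕ} (P : Matrix (Fin n) (Fin n) ℝ) (θ : ℝ) : ℝ :=
  (1 / 2) * (Real.log ((1 : Matrix (Fin n) (Fin n) ℝ) - θ • P).det
    + Matrix.trace (((1 : Matrix (Fin n) (Fin n) ℝ) - θ • P)⁻¹ - 1))

private lemma posDef_unitary_conj {n : ℕ} {D U : Matrix (Fin n) (Fin n) ℝ}
    (hD : D.PosDef) (hU : U ∈ Matrix.unitaryGroup (Fin n) ℝ) :
    (U * D * star U).PosDef := by
  have hUU : U * star U = 1 := Matrix.mem_unitaryGroup_iff.mp hU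
  rw [Matrix.posDef_iff_dotProduct_mulVec] at hD ⊢
  refine ⟨?_, fun x hx => ?_⟩
  · show (U * D * star U)ᴴ = _
    simp only [Matrix.star_eq_conjTranspose, Matrix.conjTranspose_mul,
      Matrix.conjTranspose_conjTranspose, hD.1.eq, Matrix.mul_assoc]
  · have hy : Uᴴ *ᵥ x ≠ 0 := by
      intro h
      apply hx
      have h1 : (U * Uᴴ) *ᵥ x = x := by
        rw [show U * Uᴴ = 1 from hUU, Matrix.one_mulVec]
      rw [← h1, ← Matrix.mulVec_mulVec, h, Matrix.mulVec_zero]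
    have key := hD.2 (x := Uᴴ *ᵥ x) hy
    have hrw : U * D * star U = (Uᴴ)ᴴ * D * Uᴴ := by
      rw [Matrix.conjTranspose_conjTranspose, Matrix.star_eq_conjTranspose]
    rw [hrw]
    simpa only [Matrix.star_mulVec, Matrix.dotProduct_mulVec, Matrix.vecMul_vecMul] using key

/-- For a real symmetric positive definite `P` with largest eigenvalue `λmax`,
the map `θ ↦ γ(P,θ)` is well defined on `[0, 1/λmax)` (there `I − θP` is positive
definite), vanishes at `θ = 0`, is strictly monotone increasing on `[0, 1/λmax)`,
and tends to `+∞` as `θ → (1/λmax)⁻`. -/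
theorem gammaTol_wellDefined_zero_strictMono_tendsto
    {n : ℕ} (hn : 0 < n) (P : Matrix (Fin n) (Fin n) ℝ) (hP : P.PosDef)
    (lmax : ℝ) (hlmax : IsGreatest (Set.range hP.1.eigenvalues) lmax) :
    (∀ θ ∈ Set.Ico (0 : ℝ) (1 / lmax),
        ((1 : Matrix (Fin n) (Fin n) ℝ) - θ • P).PosDef) ∧
    gammaTol P 0 = 0 ∧
    StrictMonoOn (gammaTol P) (Set.Ico (0 : ℝ) (1 / lmax)) ∧
    Tendsto (gammaTol P) (nhdsWithin (1 / lmax) (Set.Iio (1 / lmax))) atTop := by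
  have : Nonempty (Fin n) := ⟨⟨0, hn⟩⟩
  set l : Fin n → ℝ := hP.1.eigenvalues with hl
  set U : Matrix (Fin n) (Fin n) ℝ := (hP.1.eigenvectorUnitary : Matrix (Fin n) (Fin n) ℝ) with hUdef
  have hUmem : U ∈ Matrix.unitaryGroup (Fin n) ℝ := hP.1.eigenvectorUnitary.2
  have hUU : U * star U = 1 := Matrix.mem_unitaryGroup_iff.mp hUmem
  have hUU' : star U * U = 1 := Matrix.mem_unitaryGroup_iff'.mp hUmem
  have hspec : P = U * Matrix.diagonal l * star U := by
    have := hP.1.spectral_theorem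
    rw [Unitary.conjStarAlgAut_apply] at this
    exact this
  -- basic facts about eigenvalues
  have hlpos : ∀ i, 0 < l i := fun i => hP.eigenvalues_pos i
  have hle : ∀ i, l i ≤ lmax := fun i => hlmax.2 ⟨i, rfl⟩
  have hlmaxpos : 0 < lmax := by
    obtain ⟨i0, hi0⟩ := hlmax.1
    exact hi0 ▸ hlpos i0
  set c : ℝ := 1 / lmax with hc
  have hcpos : 0 < c := by positivity
  have hupos : ∀ θ ∈ Set.Ico (0 : ℝ) c, ∀ i, 0 < 1 - θ * l i := by
    intro θ hθ i
    rcases eq_or_lt_of_le hθ.1 with h | h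
    · simp [← h]
    · have h1 : θ * l i ≤ θ * lmax := mul_le_mul_of_nonneg_left (hle i) hθ.1
      have h2 : θ * lmax < c * lmax := mul_lt_mul_of_pos_right hθ.2 hlmaxpos
      have : c * lmax = 1 := by rw [hc, one_div, inv_mul_cancel₀ hlmaxpos.ne']
      linarith
  -- the key conjugation identity
  have key : ∀ θ : ℝ, (1 : Matrix (Fin n) (Fin n) ℝ) - θ • P
      = U * Matrix.diagonal (fun i => 1 - θ * l i) * star U := by
    intro θ
    have hD : Matrix.diagonal (fun i => 1 - θ * l i)
        = 1 - θ • Matrix.diagonal l := by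
      ext i j
      rcases eq_or_ne i j with rfl | hij
      · simp
      · simp [Matrix.diagonal_apply_ne _ hij, Matrix.one_apply_ne hij]
    rw [hD, Matrix.mul_sub, Matrix.sub_mul, mul_one, hUU, hspec]
    congr 1
    rw [Matrix.mul_smul, Matrix.smul_mul]
  -- determinant
  have hdet : ∀ θ : ℝ, ((1 : Matrix (Fin n) (Fin n) ℝ) - θ • P).det = ∏ i, (1 - θ * l i) := by
    intro θ
    rw [key θ, Matrix.det_mul, Matrix.det_mul]
    have h1 : U.det * (star U).det = 1 := by rw [← Matrix.det_mul, hUU, Matrix.det_one]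
    have h2 : U.det * (Matrix.diagonal fun i => 1 - θ * l i).det * (star U).det
        = (Matrix.diagonal fun i => 1 - θ * l i).det * (U.det * (star U).det) := by ring
    rw [h2, h1, mul_one, Matrix.det_diagonal]
  -- trace of the inverse
  have hUinv : U⁻¹ = star U := Matrix.inv_eq_left_inv hUU'
  have hsUinv : (star U)⁻¹ = U := Matrix.inv_eq_left_inv hUU
  have htr : ∀ θ ∈ Set.Ico (0:ℝ) c,
      Matrix.trace (((1 : Matrix (Fin n) (Fin n) ℝ) - θ • P)⁻¹ - 1)
        = (∑ i, (1 - θ * l i)⁻¹) - n := by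
    intro θ hθ
    have hne : ∀ i, (1 - θ * l i) ≠ 0 := fun i => (hupos θ hθ i).ne'
    have hDinv : (Matrix.diagonal fun i => 1 - θ * l i)⁻¹
        = Matrix.diagonal fun i => (1 - θ * l i)⁻¹ := by
      apply Matrix.inv_eq_left_inv
      rw [Matrix.diagonal_mul_diagonal]
      convert Matrix.diagonal_one using 2
      funext i
      exact inv_mul_cancel₀ (hne i)
    have hinv : ((1 : Matrix (Fin n) (Fin n) ℝ) - θ • P)⁻¹
        = U * (Matrix.diagonal fun i => (1 - θ * l i)⁻¹) * star U := by
      rw [key θ, Matrix.mul_inv_rev, Matrix.mul_inv_rev, hUinv, hsUinv, hDinv, ← mul_assoc]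
    rw [hinv, Matrix.trace_sub, Matrix.trace_one, Matrix.trace_mul_comm, ← mul_assoc,
      hUU', one_mul, Matrix.trace_diagonal]
    simp
  -- the scalar model function
  set F : ℝ → ℝ :=
    fun θ => (1/2) * ∑ i, (Real.log (1 - θ * l i) + ((1 - θ * l i)⁻¹ - 1)) with hF
  have hEq : ∀ θ ∈ Set.Ico (0:ℝ) c, gammaTol P θ = F θ := by
    intro θ hθ
    have hne : ∀ i, (1 - θ * l i) ≠ 0 := fun i => (hupos θ hθ i).ne'
    rw [gammaTol, hdet θ, htr θ hθ, Real.log_prod (fun i _ => hne i)]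
    simp only [hF, Finset.sum_add_distrib, Finset.sum_sub_distrib, Finset.sum_const,
      Finset.card_univ, Fintype.card_fin, nsmul_eq_mul, mul_one]
    try ring
  -- Part 1: positive definiteness
  have part1 : ∀ θ ∈ Set.Ico (0:ℝ) c, ((1 : Matrix (Fin n) (Fin n) ℝ) - θ • P).PosDef := by
    intro θ hθ
    rw [key θ]
    exact posDef_unitary_conj (Matrix.PosDef.diagonal (hupos θ hθ)) hUmem
  -- Part 2: value at zero
  have part2 : gammaTol P 0 = 0 := by
    simp [gammaTol]
  -- Part 3: strict monotonicity
  have hFmono : StrictMonoOn F (Set.Ico 0 c) := by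
    apply strictMonoOn_of_deriv_pos (convex_Ico 0 c)
    · apply ContinuousOn.mul continuousOn_const
      apply continuousOn_finset_sum
      intro i _
      have hcont : ContinuousOn (fun θ : ℝ => 1 - θ * l i) (Set.Ico 0 c) :=
        (continuous_const.sub (continuous_id.mul continuous_const)).continuousOn
      have hne : ∀ θ ∈ Set.Ico (0:ℝ) c, 1 - θ * l i ≠ 0 := fun θ hθ => (hupos θ hθ i).ne'
      exact (hcont.log hne).add ((hcont.inv₀ hne).sub continuousOn_const)
    · intro x hx
      rw [interior_Ico] at hx
      have hx0 : (0:ℝ) < x := hx.1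
      have hxIco : x ∈ Set.Ico (0:ℝ) c := ⟨hx0.le, hx.2⟩
      have hderiv : HasDerivAt F
          ((1/2) * ∑ i, (-(l i) / (1 - x * l i) + -(-(l i)) / (1 - x * l i)^2)) x := by
        apply HasDerivAt.const_mul
        apply HasDerivAt.fun_sum
        intro i _
        have h1 : HasDerivAt (fun θ : ℝ => 1 - θ * l i) (-(l i)) x := by
          simpa using (hasDerivAt_mul_const (l i)).const_sub 1
        exact (h1.log (hupos x hxIco i).ne').add ((h1.inv (hupos x hxIco i).ne').sub_const 1)
      rw [hderiv.deriv]
      have hpos : ∀ i : Fin n, 0 < -(l i) / (1 - x * l i) + -(-(l i)) / (1 - x * l i)^2 := by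
        intro i
        have hu := hupos x hxIco i
        have ha := hlpos i
        have heq : -(l i) / (1 - x * l i) + -(-(l i)) / (1 - x * l i)^2
            = x * (l i)^2 / (1 - x * l i)^2 := by
          field_simp
          ring
        rw [heq]; positivity
      have hsum : 0 < ∑ i, (-(l i) / (1 - x * l i) + -(-(l i)) / (1 - x * l i)^2) :=
        Finset.sum_pos (fun i _ => hpos i) Finset.univ_nonempty
      linarith
  have part3 : StrictMonoOn (gammaTol P) (Set.Ico 0 c) := by
    intro a ha b hb hab
    rw [hEq a ha, hEq b hb]
    exact hFmono ha hb hab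
  -- Part 4: the blow-up at the right endpoint
  have hterm_nonneg : ∀ u : ℝ, 0 < u → 0 ≤ Real.log u + (u⁻¹ - 1) := by
    intro u hu
    have h := Real.log_le_sub_one_of_pos (inv_pos.mpr hu)
    rw [Real.log_inv] at h
    linarith
  have hterm_big : ∀ u : ℝ, 0 < u → (Real.sqrt u)⁻¹ - 2 ≤ Real.log u + (u⁻¹ - 1) := by
    intro u hu
    set a := (Real.sqrt u)⁻¹ with hadef
    have hsp : 0 < Real.sqrt u := Real.sqrt_pos.mpr hu
    have hap : 0 < a := inv_pos.mpr hsp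
    have h1 : Real.log a ≤ a - 1 := Real.log_le_sub_one_of_pos hap
    have h2 : Real.log a = -(Real.log u / 2) := by
      rw [hadef, Real.log_inv, Real.log_sqrt hu.le]
    have h3 : a^2 = u⁻¹ := by
      rw [hadef, inv_pow, Real.sq_sqrt hu.le]
    nlinarith [sq_nonneg (a - 3/2)]
  obtain ⟨i0, hi0⟩ := hlmax.1
  have hlow : ∀ θ ∈ Set.Ioo (0:ℝ) c,
      (1/2) * ((Real.sqrt (1 - θ * lmax))⁻¹ - 2) ≤ gammaTol P θ := by
    intro θ hθ
    have hθ' : θ ∈ Set.Ico (0:ℝ) c := ⟨hθ.1.le, hθ.2⟩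
    rw [hEq θ hθ']
    have hsingle : Real.log (1 - θ * l i0) + ((1 - θ * l i0)⁻¹ - 1)
        ≤ ∑ i, (Real.log (1 - θ * l i) + ((1 - θ * l i)⁻¹ - 1)) :=
      Finset.single_le_sum (fun i _ => hterm_nonneg _ (hupos θ hθ' i)) (Finset.mem_univ i0)
    have h2 := hterm_big _ (hupos θ hθ' i0)
    have h3 : (Real.sqrt (1 - θ * lmax))⁻¹ - 2
        ≤ ∑ i, (Real.log (1 - θ * l i) + ((1 - θ * l i)⁻¹ - 1)) := by
      rw [← hi0]
      linarith
    simp only [hF]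
    linarith
  have htend : Tendsto (fun θ => (1/2) * ((Real.sqrt (1 - θ * lmax))⁻¹ - 2)) (𝓝[<] c) atTop := by
    have s1 : Tendsto (fun θ : ℝ => 1 - θ * lmax) (𝓝[<] c) (𝓝[>] (0:ℝ)) := by
      rw [tendsto_nhdsWithin_iff]
      constructor
      · have hcont : Tendsto (fun θ : ℝ => 1 - θ * lmax) (𝓝 c) (𝓝 (1 - c * lmax)) :=
          (continuous_const.sub (continuous_id.mul continuous_const)).tendsto c
        have hz : 1 - c * lmax = 0 := by rw [hc, one_div, inv_mul_cancel₀ hlmaxpos.ne', sub_self]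
        rw [hz] at hcont
        exact hcont.mono_left nhdsWithin_le_nhds
      · filter_upwards [self_mem_nhdsWithin] with θ hθ
        have h1 : θ * lmax < c * lmax := mul_lt_mul_of_pos_right hθ hlmaxpos
        have hcl : c * lmax = 1 := by rw [hc, one_div, inv_mul_cancel₀ hlmaxpos.ne']
        simp only [Set.mem_Ioi]
        linarith
    have s2 : Tendsto Real.sqrt (𝓝[>] (0:ℝ)) (𝓝[>] (0:ℝ)) := by
      rw [tendsto_nhdsWithin_iff]
      constructor
      · have h := Real.continuous_sqrt.tendsto 0
        rw [Real.sqrt_zero] at h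
        exact h.mono_left nhdsWithin_le_nhds
      · filter_upwards [self_mem_nhdsWithin] with u hu
        exact Real.sqrt_pos.mpr hu
    have s3 : Tendsto (fun θ : ℝ => (Real.sqrt (1 - θ * lmax))⁻¹) (𝓝[<] c) atTop :=
      tendsto_inv_nhdsGT_zero.comp (s2.comp s1)
    have s4 : Tendsto (fun θ : ℝ => (Real.sqrt (1 - θ * lmax))⁻¹ - 2) (𝓝[<] c) atTop := by
      simpa [sub_eq_add_neg] using tendsto_atTop_add_const_right (𝓝[<] c) (-2) s3
    exact s4.const_mul_atTop (by norm_num : (0:ℝ) < 1/2)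
  have part4 : Tendsto (gammaTol P) (𝓝[<] c) atTop := by
    apply tendsto_atTop_mono' (𝓝[<] c) _ htend
    filter_upwards [Ioo_mem_nhdsLT_of_mem (⟨hcpos, le_refl c⟩ : c ∈ Set.Ioc 0 c)] with θ hθ
    exact hlow θ hθ
  exact ⟨part1, part2, part3, part4⟩
end

section
/- Let P be an n×n real symmetric positive definite matrix and let c > 0. Then there exists a unique θ with 0 < θ < 1/λ_max(P) such that γ(P,θ) = c, where γ(P,θ) = (1/2)·(log det(I − θP) + tr((I − θP)^{-1} − I)). -/
open Matrix

/-- The auxiliary scalar function `φ(x) = (1/2)(log(1−x) + ((1−x)⁻¹ − 1))`. -/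
noncomputable def rekfPhi (x : ℝ) : ℝ := (1 / 2) * (Real.log (1 - x) + ((1 - x)⁻¹ - 1))

lemma rekfPhi_zero : rekfPhi 0 = 0 := by simp [rekfPhi]

lemma rekfPhi_hasDerivAt {x : ℝ} (hx : x ≠ 1) :
    HasDerivAt rekfPhi ((1/2) * ((-1)/(1-x) + (-(-1)/(1-x)^2))) x := by
  have hne : (1 : ℝ) - x ≠ 0 := sub_ne_zero.mpr (Ne.symm hx)
  have h1 : HasDerivAt (fun y : ℝ => 1 - y) (-1) x := (hasDerivAt_id x).const_sub 1
  have hlog : HasDerivAt (fun y : ℝ => Real.log (1 - y)) ((-1)/(1-x)) x := h1.log hne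
  have hinv : HasDerivAt (fun y : ℝ => (1 - y)⁻¹) (-(-1)/(1-x)^2) x := h1.inv hne
  exact ((hlog.add (hinv.sub_const 1)).const_mul (1/2))

lemma rekfPhi_contOn : ContinuousOn rekfPhi (Set.Iio 1) := by
  have h1 : ContinuousOn (fun y : ℝ => 1 - y) (Set.Iio 1) :=
    (continuous_const.sub continuous_id).continuousOn
  have hne : ∀ x ∈ Set.Iio (1:ℝ), (1:ℝ) - x ≠ 0 := fun x hx => by
    simp only [Set.mem_Iio] at hx; intro h; linarith [sub_eq_zero.mp h]
  exact continuousOn_const.mul ((h1.log hne).add ((h1.inv₀ hne).sub continuousOn_const))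

lemma rekfPhi_strictMonoOn : StrictMonoOn rekfPhi (Set.Ico 0 1) := by
  apply strictMonoOn_of_deriv_pos (convex_Ico 0 1)
  · exact rekfPhi_contOn.mono (fun x hx => lt_of_lt_of_le hx.2 le_rfl)
  · intro x hx
    rw [interior_Ico] at hx
    obtain ⟨hx0, hx1⟩ := hx
    rw [(rekfPhi_hasDerivAt (ne_of_lt hx1)).deriv]
    have hne : (0:ℝ) < 1 - x := by linarith
    have : (1/2 : ℝ) * ((-1)/(1-x) + (-(-1)/(1-x)^2)) = x / (2 * (1-x)^2) := by
      field_simp; ring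
    rw [this]; positivity

lemma rekfPhi_nonneg {x : ℝ} (hx : x ∈ Set.Ico (0:ℝ) 1) : 0 ≤ rekfPhi x := by
  rcases eq_or_lt_of_le hx.1 with h | h
  · rw [← h, rekfPhi_zero]
  · have := rekfPhi_strictMonoOn (Set.left_mem_Ico.mpr one_pos) hx h
    rw [rekfPhi_zero] at this; exact this.le

lemma rekfPhi_lower {t : ℝ} (ht : 0 < t) :
    (1/2) * (1 / Real.sqrt t - 1)^2 ≤ rekfPhi (1 - t) := by
  have hs : 0 < Real.sqrt t := Real.sqrt_pos.mpr ht
  have hsq : Real.sqrt t ^ 2 = t := Real.sq_sqrt ht.le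
  have hlog : 1 - (Real.sqrt t)⁻¹ ≤ Real.log (Real.sqrt t) := by
    have := Real.log_le_sub_one_of_pos (x := (Real.sqrt t)⁻¹) (by positivity)
    rw [Real.log_inv] at this; linarith
  have hlog2 : Real.log t = 2 * Real.log (Real.sqrt t) := by
    rw [Real.log_sqrt ht.le]; ring
  have hinv : t⁻¹ = ((Real.sqrt t)⁻¹)^2 := by
    rw [inv_pow, hsq]
  simp only [rekfPhi, sub_sub_cancel]
  rw [hlog2, hinv]
  have h2 : (Real.sqrt t)⁻¹ = 1 / Real.sqrt t := (one_div _).symm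
  nlinarith [hlog]

lemma gammaTol_eq_sum {n : ℕ} (P : Matrix (Fin n) (Fin n) ℝ) (hP : P.PosDef) (θ : ℝ)
    (hpos : ∀ i, 0 < 1 - θ * hP.1.eigenvalues i) :
    gammaTol P θ = ∑ i, rekfPhi (θ * hP.1.eigenvalues i) := by
  set e := hP.1.eigenvalues with he
  set U : Matrix (Fin n) (Fin n) ℝ :=
    (Matrix.IsHermitian.eigenvectorUnitary hP.1 : Matrix (Fin n) (Fin n) ℝ) with hUdef
  have hU1 : U * star U = 1 :=
    mem_unitaryGroup_iff.mp (Matrix.IsHermitian.eigenvectorUnitary hP.1).2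
  have hU2 : star U * U = 1 :=
    mem_unitaryGroup_iff'.mp (Matrix.IsHermitian.eigenvectorUnitary hP.1).2
  have hspec : P = U * Matrix.diagonal e * star U := by
    have h := hP.1.spectral_theorem; simpa using h
  set D : Matrix (Fin n) (Fin n) ℝ := Matrix.diagonal (fun i => 1 - θ * e i) with hDdef
  set Di : Matrix (Fin n) (Fin n) ℝ := Matrix.diagonal (fun i => (1 - θ * e i)⁻¹) with hDidef
  have hDdiag : D = 1 - θ • Matrix.diagonal e := by
    ext i j
    rcases eq_or_ne i j with rfl | h
    · simp [hDdef, Matrix.one_apply_eq]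
    · simp [hDdef, Matrix.diagonal_apply_ne _ h, Matrix.one_apply_ne h]
  have hD : (1 : Matrix (Fin n) (Fin n) ℝ) - θ • P = U * D * star U := by
    rw [hDdiag, hspec, mul_sub, sub_mul, mul_one, hU1]
    congr 1
    rw [Matrix.mul_smul, Matrix.smul_mul]
  have hdet : ((1 : Matrix (Fin n) (Fin n) ℝ) - θ • P).det = ∏ i, (1 - θ * e i) := by
    rw [hD, Matrix.det_mul, Matrix.det_mul]
    have h1 : U.det * (star U).det = 1 := by rw [← Matrix.det_mul, hU1, Matrix.det_one]
    calc U.det * D.det * (star U).det = (U.det * (star U).det) * D.det := by ring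
      _ = D.det := by rw [h1, one_mul]
      _ = ∏ i, (1 - θ * e i) := Matrix.det_diagonal
  have hDDi : D * Di = 1 := by
    rw [hDdef, hDidef, Matrix.diagonal_mul_diagonal]
    have : (fun i => (1 - θ * e i) * (1 - θ * e i)⁻¹) = fun _ => (1:ℝ) := by
      funext i; exact mul_inv_cancel₀ (ne_of_gt (hpos i))
    rw [this, Matrix.diagonal_one]
  have hinvD : ((1 : Matrix (Fin n) (Fin n) ℝ) - θ • P)⁻¹ = U * Di * star U := by
    apply Matrix.inv_eq_right_inv
    rw [hD]
    calc U * D * star U * (U * Di * star U)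
        = U * (D * (star U * U) * Di) * star U := by
          simp only [Matrix.mul_assoc]
      _ = 1 := by rw [hU2, Matrix.mul_one, hDDi, Matrix.mul_one, hU1]
  have htr : Matrix.trace (((1 : Matrix (Fin n) (Fin n) ℝ) - θ • P)⁻¹)
      = ∑ i, (1 - θ * e i)⁻¹ := by
    rw [hinvD, Matrix.trace_mul_cycle, hU2, Matrix.one_mul,
      Matrix.trace_diagonal]
  have hlog : Real.log (∏ i, (1 - θ * e i)) = ∑ i, Real.log (1 - θ * e i) :=
    Real.log_prod (fun i _ => ne_of_gt (hpos i))
  rw [gammaTol, hdet, hlog, Matrix.trace_sub, htr, Matrix.trace_one]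
  simp only [rekfPhi]
  rw [← Finset.mul_sum, Finset.sum_add_distrib, Finset.sum_sub_distrib, Finset.sum_const,
    Finset.card_univ, Fintype.card_fin]
  ring

/-- Well-posedness of step 8 of the robust extended Kalman filter: for a real
symmetric positive definite `P` with largest eigenvalue `λmax` and any tolerance
`c > 0`, there is a unique `θ` with `0 < θ < 1/λmax` such that `γ(P,θ) = c`. -/
theorem existsUnique_theta_of_tolerance
    {n : ℕ} (hn : 0 < n) (P : Matrix (Fin n) (Fin n) ℝ) (hP : P.PosDef)
    (lmax : ℝ) (hlmax : IsGreatest (Set.range hP.1.eigenvalues) lmax)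
    (c : ℝ) (hc : 0 < c) :
    ∃! θ : ℝ, 0 < θ ∧ θ < 1 / lmax ∧ gammaTol P θ = c := by
  have hne : Nonempty (Fin n) := ⟨⟨0, hn⟩⟩
  set e := hP.1.eigenvalues with he
  obtain ⟨i0, hi0⟩ := hlmax.1
  have hepos : ∀ i, 0 < e i := fun i => hP.eigenvalues_pos i
  have hl : 0 < lmax := hi0 ▸ hepos i0
  have hle : ∀ i, e i ≤ lmax := fun i => hlmax.2 ⟨i, rfl⟩
  set g : ℝ → ℝ := fun θ => ∑ i, rekfPhi (θ * e i) with hg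
  -- membership lemma
  have hmem : ∀ θ ∈ Set.Ico (0:ℝ) (1/lmax), ∀ i, θ * e i ∈ Set.Ico (0:ℝ) 1 := by
    intro θ hθ i
    refine ⟨mul_nonneg hθ.1 (hepos i).le, ?_⟩
    calc θ * e i ≤ θ * lmax := mul_le_mul_of_nonneg_left (hle i) hθ.1
      _ < (1/lmax) * lmax := mul_lt_mul_of_pos_right hθ.2 hl
      _ = 1 := by field_simp
  have hgamma_eq : ∀ θ ∈ Set.Ico (0:ℝ) (1/lmax), gammaTol P θ = g θ := by
    intro θ hθ
    exact gammaTol_eq_sum P hP θ (fun i => by have := (hmem θ hθ i).2; linarith)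
  have hg_mono : StrictMonoOn g (Set.Ico 0 (1/lmax)) := by
    intro a ha b hb hab
    apply Finset.sum_lt_sum_of_nonempty Finset.univ_nonempty
    intro i _
    exact rekfPhi_strictMonoOn (hmem a ha i) (hmem b hb i)
      (mul_lt_mul_of_pos_right hab (hepos i))
  have hg0 : g 0 = 0 := by simp [hg, rekfPhi_zero]
  -- choose the right endpoint b
  set s := Real.sqrt (2*c) with hs
  have hspos : 0 < s := Real.sqrt_pos.mpr (by linarith)
  set t0 : ℝ := ((1 + s)⁻¹)^2 with ht0
  have ht0pos : 0 < t0 := by positivity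
  have hinvlt : (1 + s)⁻¹ < 1 := by
    rw [inv_lt_one_iff₀]; right; linarith
  have ht0lt : t0 < 1 := by
    have h0 : (0:ℝ) ≤ (1 + s)⁻¹ := by positivity
    nlinarith
  set b : ℝ := (1 - t0)/lmax with hb
  have hb0 : 0 < b := by apply div_pos; linarith; exact hl
  have hblt : b < 1/lmax := by
    rw [hb, div_lt_div_iff_of_pos_right hl]; linarith
  have hblmax : b * lmax = 1 - t0 := by
    rw [hb]; field_simp
  have hbIco : b ∈ Set.Ico (0:ℝ) (1/lmax) := ⟨hb0.le, hblt⟩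
  -- c ≤ g b
  have hsqrt_t0 : Real.sqrt t0 = (1 + s)⁻¹ := by
    rw [ht0, Real.sqrt_sq (by positivity)]
  have hphi_b : c ≤ rekfPhi (b * lmax) := by
    rw [hblmax]
    have h := rekfPhi_lower ht0pos
    have h1 : 1 / Real.sqrt t0 - 1 = s := by
      rw [hsqrt_t0, one_div, inv_inv]; ring
    rw [h1] at h
    have h2 : s^2 = 2*c := Real.sq_sqrt (by linarith)
    nlinarith
  have hcb : c ≤ g b := by
    calc c ≤ rekfPhi (b * lmax) := hphi_b
      _ = rekfPhi (b * e i0) := by rw [hi0]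
      _ ≤ g b := Finset.single_le_sum
          (fun i _ => rekfPhi_nonneg (hmem b hbIco i)) (Finset.mem_univ i0)
  -- continuity on [0, b]
  have hcont : ContinuousOn g (Set.Icc 0 b) := by
    apply continuousOn_finset_sum
    intro i _
    apply rekfPhi_contOn.comp ((continuous_id.mul continuous_const).continuousOn)
    intro θ hθ
    have h1 : θ * e i ≤ b * e i := mul_le_mul_of_nonneg_right hθ.2 (hepos i).le
    have h2 : b * e i < 1 := (hmem b hbIco i).2
    exact lt_of_le_of_lt h1 h2
  -- intermediate value theorem
  have hivt := intermediate_value_Icc hb0.le hcont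
  have hcmem : c ∈ Set.Icc (g 0) (g b) := ⟨by rw [hg0]; exact hc.le, hcb⟩
  obtain ⟨θ0, hθ0mem, hθ0⟩ := hivt hcmem
  have hθ0pos : 0 < θ0 := by
    rcases eq_or_lt_of_le hθ0mem.1 with h | h
    · exfalso; rw [← h, hg0] at hθ0; linarith
    · exact h
  have hθ0lt : θ0 < 1/lmax := lt_of_le_of_lt hθ0mem.2 hblt
  have hθ0Ico : θ0 ∈ Set.Ico (0:ℝ) (1/lmax) := ⟨hθ0pos.le, hθ0lt⟩
  refine ⟨θ0, ⟨hθ0pos, hθ0lt, by rw [hgamma_eq θ0 hθ0Ico, hθ0]⟩, ?_⟩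
  intro y ⟨hy0, hy1, hyc⟩
  have hyIco : y ∈ Set.Ico (0:ℝ) (1/lmax) := ⟨hy0.le, hy1⟩
  apply hg_mono.injOn hyIco hθ0Ico
  rw [← hgamma_eq y hyIco, hyc, ← hθ0]
end

section
/- Let P be an n×n real symmetric positive definite matrix and θ ∈ ℝ with 0 < θ < 1/λ_max(P), and set V := (P^{-1} − θI)^{-1}. Then V − P = θ·P·(I − θP)^{-1}·P, and V − P is symmetric positive definite; in particular V ⪰ P in the Loewner order with strict inequality. -/
open Matrix

private lemma posDef_conj_aux {n : ℕ} {M B : Matrix (Fin n) (Fin n) ℝ}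
    (hM : M.PosDef) (hB : IsUnit B) : (Bᴴ * M * B).PosDef := by
  refine posDef_iff_dotProduct_mulVec.2 ⟨Matrix.isHermitian_conjTranspose_mul_mul B hM.1, fun x hx => ?_⟩
  have hBx : B *ᵥ x ≠ 0 := by
    intro h
    exact hx ((Matrix.mulVec_injective_iff_isUnit.2 hB).eq_iff.1
      (by simpa using h))
  have := hM.dotProduct_mulVec_pos hBx
  calc 0 < star (B *ᵥ x) ⬝ᵥ M *ᵥ (B *ᵥ x) := this
    _ = star x ⬝ᵥ (Bᴴ * M * B) *ᵥ x := by
        rw [star_mulVec, ← Matrix.mulVec_mulVec, ← Matrix.mulVec_mulVec,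
          Matrix.dotProduct_mulVec (star x)]

private lemma posDef_smul_aux {n : ℕ} {M : Matrix (Fin n) (Fin n) ℝ}
    (hM : M.PosDef) {c : ℝ} (hc : 0 < c) : (c • M).PosDef := by
  refine posDef_iff_dotProduct_mulVec.2 ⟨?_, fun x hx => ?_⟩
  · unfold Matrix.IsHermitian
    rw [conjTranspose_smul, hM.1.eq]
    simp
  · have := hM.dotProduct_mulVec_pos hx
    rw [smul_mulVec, dotProduct_smul]
    exact mul_pos hc this

/-- Covariance inflation of the robust extended Kalman filter: for a real symmetric
positive definite `P` with largest eigenvalue `λmax`, `0 < θ < 1/λmax`, and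
`V := (P⁻¹ − θI)⁻¹`, one has `V − P = θ·P·(I − θP)⁻¹·P` and `V − P` is symmetric
positive definite; in particular `V ⪰ P` in the Loewner order, strictly. -/
theorem robust_covariance_inflation
    {n : ℕ} (P : Matrix (Fin n) (Fin n) ℝ) (hP : P.PosDef)
    (lmax : ℝ) (hlmax : IsGreatest (Set.range hP.1.eigenvalues) lmax)
    (θ : ℝ) (hθ0 : 0 < θ) (hθ1 : θ < 1 / lmax)
    (V : Matrix (Fin n) (Fin n) ℝ)
    (hV : V = (P⁻¹ - θ • (1 : Matrix (Fin n) (Fin n) ℝ))⁻¹) :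
    V - P = θ • (P * ((1 : Matrix (Fin n) (Fin n) ℝ) - θ • P)⁻¹ * P) ∧
    (V - P).PosDef := by
  have hlmax_pos : 0 < lmax := by
    obtain ⟨i, hi⟩ := hlmax.1
    exact hi ▸ hP.eigenvalues_pos i
  have heig : ∀ i, hP.1.eigenvalues i < θ⁻¹ := by
    intro i
    have h1 : hP.1.eigenvalues i ≤ lmax := hlmax.2 ⟨i, rfl⟩
    have h2 : lmax < θ⁻¹ := by
      rw [one_div] at hθ1
      exact (lt_inv_comm₀ hlmax_pos hθ0).mpr hθ1
    exact lt_of_le_of_lt h1 h2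
  -- θ⁻¹ • 1 - P is positive definite via the spectral theorem
  set U : Matrix (Fin n) (Fin n) ℝ := (hP.1.eigenvectorUnitary : Matrix (Fin n) (Fin n) ℝ)
  have hUU : U * star U = 1 := Matrix.mem_unitaryGroup_iff.mp hP.1.eigenvectorUnitary.2
  have hUU' : star U * U = 1 := Matrix.mem_unitaryGroup_iff'.mp hP.1.eigenvectorUnitary.2
  have hUstar_unit : IsUnit (star U) := ⟨⟨star U, U, hUU', hUU⟩, rfl⟩
  have hdiag : (Matrix.diagonal (fun i => θ⁻¹ - hP.1.eigenvalues i)).PosDef :=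
    Matrix.posDef_diagonal_iff.2 fun i => sub_pos.2 (heig i)
  have hdecomp : θ⁻¹ • (1 : Matrix (Fin n) (Fin n) ℝ) - P
      = U * Matrix.diagonal (fun i => θ⁻¹ - hP.1.eigenvalues i) * star U := by
    have hspec := hP.1.spectral_theorem
    simp only [Unitary.conjStarAlgAut_apply, Unitary.coe_star] at hspec
    have hdsub : Matrix.diagonal (fun i => θ⁻¹ - hP.1.eigenvalues i)
        = θ⁻¹ • (1 : Matrix (Fin n) (Fin n) ℝ)
          - Matrix.diagonal (RCLike.ofReal ∘ hP.1.eigenvalues) := by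
      rw [Matrix.smul_one_eq_diagonal, ← Matrix.diagonal_sub]
      congr 1
    rw [hdsub, Matrix.mul_sub, Matrix.sub_mul]
    rw [← hspec]
    congr 1
    rw [Matrix.mul_smul, Matrix.smul_mul, Matrix.mul_one, hUU]
  have hPosHalf : (θ⁻¹ • (1 : Matrix (Fin n) (Fin n) ℝ) - P).PosDef := by
    rw [hdecomp]
    have : ((star U)ᴴ * Matrix.diagonal (fun i => θ⁻¹ - hP.1.eigenvalues i) * star U).PosDef :=
      posDef_conj_aux hdiag hUstar_unit
    rwa [Matrix.star_eq_conjTranspose, conjTranspose_conjTranspose, ← Matrix.star_eq_conjTranspose] at this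
  set A : Matrix (Fin n) (Fin n) ℝ := (1 : Matrix (Fin n) (Fin n) ℝ) - θ • P with hA
  have hAeq : A = θ • (θ⁻¹ • (1 : Matrix (Fin n) (Fin n) ℝ) - P) := by
    rw [smul_sub, smul_smul, mul_inv_cancel₀ (ne_of_gt hθ0), one_smul]
  have hAPos : A.PosDef := hAeq ▸ posDef_smul_aux hPosHalf hθ0
  have hAunit : IsUnit A.det := isUnit_iff_ne_zero.2 (ne_of_gt hAPos.det_pos)
  have hPunit : IsUnit P.det := isUnit_iff_ne_zero.2 (ne_of_gt hP.det_pos)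
  -- P⁻¹ - θ•1 = P⁻¹ * A
  have hQ : P⁻¹ - θ • (1 : Matrix (Fin n) (Fin n) ℝ) = P⁻¹ * A := by
    rw [hA, Matrix.mul_sub, Matrix.mul_one, Matrix.mul_smul, Matrix.nonsing_inv_mul P hPunit]
  -- V = A⁻¹ * P
  have hVeq : V = A⁻¹ * P := by
    rw [hV, hQ, Matrix.mul_inv_rev, Matrix.nonsing_inv_nonsing_inv P hPunit]
  -- commutation
  have hcomm : P * A = A * P := by
    rw [hA, Matrix.mul_sub, Matrix.sub_mul, Matrix.mul_one, Matrix.one_mul,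
      Matrix.mul_smul, Matrix.smul_mul]
  have hcomm' : P * A⁻¹ = A⁻¹ * P := by
    calc P * A⁻¹ = A⁻¹ * A * (P * A⁻¹) := by
          rw [Matrix.nonsing_inv_mul A hAunit, Matrix.one_mul]
      _ = A⁻¹ * (A * P) * A⁻¹ := by
          rw [Matrix.mul_assoc A⁻¹ A (P * A⁻¹), ← Matrix.mul_assoc A P A⁻¹,
            Matrix.mul_assoc A⁻¹ (A * P) A⁻¹]
      _ = A⁻¹ * (P * A) * A⁻¹ := by rw [hcomm]
      _ = A⁻¹ * P := by
          rw [Matrix.mul_assoc A⁻¹ (P * A) A⁻¹, Matrix.mul_assoc P A A⁻¹,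
            Matrix.mul_nonsing_inv A hAunit, Matrix.mul_one]
  -- main identity
  have hmain : V - P = θ • (P * A⁻¹ * P) := by
    rw [hVeq]
    have hP' : P = A⁻¹ * (A * P) := by
      rw [← Matrix.mul_assoc, Matrix.nonsing_inv_mul A hAunit, Matrix.one_mul]
    calc A⁻¹ * P - P = A⁻¹ * P - A⁻¹ * (A * P) := by rw [← hP']
      _ = A⁻¹ * (P - A * P) := by rw [Matrix.mul_sub]
      _ = A⁻¹ * (θ • (P * P)) := by
          congr 1
          rw [hA, Matrix.sub_mul, Matrix.one_mul, Matrix.smul_mul]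
          abel
      _ = θ • (A⁻¹ * P * P) := by rw [Matrix.mul_smul, Matrix.mul_assoc]
      _ = θ • (P * A⁻¹ * P) := by rw [← hcomm']
  refine ⟨hmain, ?_⟩
  rw [hmain]
  have hAinv : (A⁻¹).PosDef := hAPos.inv
  have : (Pᴴ * A⁻¹ * P).PosDef := posDef_conj_aux hAinv hP.isUnit
  rw [hP.1.eq] at this
  exact posDef_smul_aux this hθ0
end
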